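/- For every integer t ≥ 15, the 2-color Ramsey number R(S_t^3, S_t^3) equals 2t - 1. -/

import Mathlib

/-- `SGraph t r` is the graph `S_t^r`: a star `K_{1,t-1}` with center `0`
together with `r` independent edges `(1,2), (3,4), …, (2r-1,2r)` among the leaves. -/
def SGraph (t r : ℕ) : SimpleGraph (Fin t) :=
  SimpleGraph.fromRel fun a b =>
    a.val = 0 ∨ (b.val = a.val + 1 ∧ a.val % 2 = 1 ∧ b.val ≤ 2 * r)

/-- A monochromatic copy of `H` in the edge-coloring `c` of the complete graph on `V`. -/
def HasMonoCopy {α V C : Type*} (H : SimpleGraph α) (c : Sym2 V → C) : Prop :=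
  ∃ (f : α ↪ V) (col : C), ∀ a b : α, H.Adj a b → c s(f a, f b) = col

/-- A copy of `H` in the edge-coloring `c` all of whose edges get color `col`. -/
def HasMonoCopyCol {α V C : Type*} (H : SimpleGraph α) (c : Sym2 V → C) (col : C) : Prop :=
  ∃ f : α ↪ V, ∀ a b : α, H.Adj a b → c s(f a, f b) = col

/-- A rainbow triangle in the edge-coloring `c` of the complete graph on `V`. -/
def HasRainbowTriangle {V C : Type*} (c : Sym2 V → C) : Prop :=
  ∃ x y z : V,
    c s(x, y) ≠ c s(y, z) ∧ c s(y, z) ≠ c s(x, z) ∧ c s(x, y) ≠ c s(x, z)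

namespace RamseyAux

open Finset

variable {V : Type*} [Fintype V] [DecidableEq V]
set_option linter.unusedSectionVars false

def nbr (c : Sym2 V → Fin 2) (γ : Fin 2) (x : V) : Finset V :=
  Finset.univ.filter fun y => x ≠ y ∧ c s(x, y) = γ

lemma mem_nbr {c : Sym2 V → Fin 2} {γ : Fin 2} {x y : V} :
    y ∈ nbr c γ x ↔ x ≠ y ∧ c s(x, y) = γ := by simp [nbr]

lemma csymm (c : Sym2 V → Fin 2) (x y : V) : c s(x, y) = c s(y, x) := by rw [Sym2.eq_swap]

lemma two_total : ∀ (a b z : Fin 2), a ≠ b → z = a ∨ z = b := by decide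
lemma two_other : ∀ (a b z : Fin 2), a ≠ b → z ≠ a → z = b := by decide

lemma deg_sum (c : Sym2 V → Fin 2) {col oth : Fin 2} (hne : col ≠ oth) (x : V) :
    (nbr c col x).card + (nbr c oth x).card = Fintype.card V - 1 := by
  have hdisj : Disjoint (nbr c col x) (nbr c oth x) := by
    rw [Finset.disjoint_left]
    intro y hy hy'
    rw [mem_nbr] at hy hy'
    exact hne (hy.2 ▸ hy'.2 ▸ rfl)
  rw [← Finset.card_union_of_disjoint hdisj]
  have huni : nbr c col x ∪ nbr c oth x = Finset.univ.erase x := by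
    ext y
    simp only [Finset.mem_union, mem_nbr, Finset.mem_erase, Finset.mem_univ, and_true]
    constructor
    · rintro (⟨h, _⟩ | ⟨h, _⟩) <;> exact h.symm
    · intro h
      rcases two_total col oth (c s(x, y)) hne with h' | h'
      · exact Or.inl ⟨h.symm, h'⟩
      · exact Or.inr ⟨h.symm, h'⟩
  rw [huni, Finset.card_erase_of_mem (Finset.mem_univ x), Finset.card_univ]

lemma exists_list (A : Finset V) {k : ℕ} (h : k ≤ A.card) :
    ∃ l : List V, l.Nodup ∧ l.length = k ∧ ∀ x ∈ l, x ∈ A := by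
  obtain ⟨B, hB, hBcard⟩ := Finset.exists_subset_card_eq h
  exact ⟨B.toList, B.nodup_toList, by simp [hBcard], fun x hx => hB (Finset.mem_toList.mp hx)⟩

lemma six_of (A : Finset V) (h : 6 ≤ A.card) :
    ∃ k0 k1 k2 k3 k4 k5 : V, ([k0, k1, k2, k3, k4, k5] : List V).Nodup ∧
      k0 ∈ A ∧ k1 ∈ A ∧ k2 ∈ A ∧ k3 ∈ A ∧ k4 ∈ A ∧ k5 ∈ A := by
  obtain ⟨l, hnd, hlen, hmem⟩ := exists_list A h
  rcases l with _ | ⟨k0, _ | ⟨k1, _ | ⟨k2, _ | ⟨k3, _ | ⟨k4, _ | ⟨k5, l⟩⟩⟩⟩⟩⟩ <;>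
    simp only [List.length] at hlen <;> try omega
  have hl0 : l = [] := List.length_eq_zero_iff.mp (by omega)
  subst hl0
  exact ⟨k0, k1, k2, k3, k4, k5, hnd, hmem _ (by simp), hmem _ (by simp), hmem _ (by simp),
    hmem _ (by simp), hmem _ (by simp), hmem _ (by simp)⟩

lemma three_of (A : Finset V) (h : 3 ≤ A.card) :
    ∃ k0 k1 k2 : V, k0 ≠ k1 ∧ k0 ≠ k2 ∧ k1 ≠ k2 ∧ k0 ∈ A ∧ k1 ∈ A ∧ k2 ∈ A := by
  obtain ⟨l, hnd, hlen, hmem⟩ := exists_list A h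
  rcases l with _ | ⟨k0, _ | ⟨k1, _ | ⟨k2, l⟩⟩⟩ <;> simp only [List.length] at hlen <;> try omega
  have hl0 : l = [] := List.length_eq_zero_iff.mp (by omega)
  subst hl0
  simp only [List.nodup_cons, List.mem_cons, List.not_mem_nil, or_false, List.mem_singleton,
    not_or, List.nodup_nil, and_true] at hnd
  exact ⟨k0, k1, k2, hnd.1.1, hnd.1.2, hnd.2.1, hmem _ (by simp), hmem _ (by simp),
    hmem _ (by simp)⟩

lemma embed {t : ℕ} (ht : 15 ≤ t) (c : Sym2 V → Fin 2) (col : Fin 2) (x : V) (S : Finset V)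
    (hScard : S.card = t - 1) (hxS : x ∉ S) (hcol : ∀ y ∈ S, c s(x, y) = col)
    (a1 b1 a2 b2 a3 b3 : V)
    (ha1 : a1 ∈ S) (hb1 : b1 ∈ S) (ha2 : a2 ∈ S) (hb2 : b2 ∈ S) (ha3 : a3 ∈ S) (hb3 : b3 ∈ S)
    (hnd : ([a1, b1, a2, b2, a3, b3] : List V).Nodup)
    (e1 : c s(a1, b1) = col) (e2 : c s(a2, b2) = col) (e3 : c s(a3, b3) = col) :
    HasMonoCopy (SGraph t 3) c := by
  classical
  set T : Finset V := {a1, b1, a2, b2, a3, b3} with hT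
  have hTS : T ⊆ S := by
    intro y hy
    simp only [hT, Finset.mem_insert, Finset.mem_singleton] at hy
    rcases hy with rfl | rfl | rfl | rfl | rfl | rfl <;> assumption
  have hTl : T = ([a1, b1, a2, b2, a3, b3] : List V).toFinset := by simp [hT]
  have hTcard : T.card = 6 := by
    rw [hTl, List.toFinset_card_of_nodup hnd]; rfl
  set S' : Finset V := S \ T with hS'
  have hS'card : S'.card = t - 7 := by
    rw [hS', Finset.card_sdiff_of_subset hTS, hScard, hTcard]; omega
  set l : List V := [a1, b1, a2, b2, a3, b3] ++ S'.toList with hl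
  have hlen : l.length = t - 1 := by
    simp only [hl, List.length_append, List.length_cons, List.length_nil,
      Finset.length_toList, hS'card]
    omega
  have hlnd : l.Nodup := by
    rw [hl]
    refine List.Nodup.append hnd S'.nodup_toList ?_
    intro a hal haS'
    have haT : a ∈ T := by
      rw [hTl, List.mem_toFinset]; exact hal
    have : a ∈ S' := Finset.mem_toList.mp haS'
    rw [hS', Finset.mem_sdiff] at this
    exact this.2 haT
  have hlmem : ∀ y ∈ l, y ∈ S := by
    intro y hy
    rw [hl, List.mem_append] at hy
    rcases hy with hy | hy
    · exact hTS (by rw [hTl, List.mem_toFinset]; exact hy)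
    · exact (Finset.mem_sdiff.mp (Finset.mem_toList.mp hy)).1
  set f : Fin t → V := fun i => if (i : ℕ) = 0 then x else l.getD ((i : ℕ) - 1) x with hf
  have hlt : ∀ i : Fin t, (i : ℕ) ≠ 0 → (i : ℕ) - 1 < l.length := by
    intro i h
    rw [hlen]
    have := i.isLt
    omega
  have hmemf : ∀ i : Fin t, (i : ℕ) ≠ 0 → f i ∈ S := by
    intro i h
    rw [hf]
    simp only [if_neg h]
    rw [List.getD_eq_get _ _ ⟨_, hlt i h⟩]
    exact hlmem _ (List.get_mem _ _)
  have hf0 : ∀ i : Fin t, (i : ℕ) = 0 → f i = x := by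
    intro i h; simp [hf, h]
  have hfk : ∀ (i : Fin t) (k : ℕ), (i : ℕ) = k + 1 → f i = l.getD k x := by
    intro i k h
    rw [hf]
    simp only [if_neg (by omega : ¬ (i : ℕ) = 0)]
    rw [show (i : ℕ) - 1 = k from by omega]
  have g0 : l.getD 0 x = a1 := rfl
  have g1 : l.getD 1 x = b1 := rfl
  have g2 : l.getD 2 x = a2 := rfl
  have g3 : l.getD 3 x = b2 := rfl
  have g4 : l.getD 4 x = a3 := rfl
  have g5 : l.getD 5 x = b3 := rfl
  have hinj : Function.Injective f := by
    intro i j hij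
    by_cases hi : (i : ℕ) = 0 <;> by_cases hj : (j : ℕ) = 0
    · exact Fin.ext (by omega)
    · exfalso
      rw [hf0 i hi] at hij
      exact hxS (hij ▸ hmemf j hj)
    · exfalso
      rw [hf0 j hj] at hij
      exact hxS (hij.symm ▸ hmemf i hi)
    · rw [hf] at hij
      simp only [if_neg hi, if_neg hj] at hij
      rw [List.getD_eq_get _ _ ⟨_, hlt i hi⟩, List.getD_eq_get _ _ ⟨_, hlt j hj⟩] at hij
      have := List.nodup_iff_injective_get.mp hlnd hij
      have hv : (i : ℕ) - 1 = (j : ℕ) - 1 := congrArg Fin.val this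
      exact Fin.ext (by omega)
  have key : ∀ u w : Fin t, u ≠ w →
      ((u : ℕ) = 0 ∨ ((w : ℕ) = (u : ℕ) + 1 ∧ (u : ℕ) % 2 = 1 ∧ (w : ℕ) ≤ 2 * 3)) →
      c s(f u, f w) = col := by
    intro u w huw hr
    rcases hr with h0 | ⟨hw, hodd, hle⟩
    · rw [hf0 u h0]
      have hw0 : (w : ℕ) ≠ 0 := fun h => huw (Fin.ext (by omega))
      exact hcol _ (hmemf w hw0)
    · have hu : (u : ℕ) = 1 ∨ (u : ℕ) = 3 ∨ (u : ℕ) = 5 := by omega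
      rcases hu with h | h | h
      · rw [hfk u 0 (by omega), hfk w 1 (by omega), g0, g1]; exact e1
      · rw [hfk u 2 (by omega), hfk w 3 (by omega), g2, g3]; exact e2
      · rw [hfk u 4 (by omega), hfk w 5 (by omega), g4, g5]; exact e3
  refine ⟨⟨f, hinj⟩, col, ?_⟩
  intro a b hab
  simp only [SGraph, SimpleGraph.fromRel_adj] at hab
  obtain ⟨hne, hrel⟩ := hab
  rcases hrel with h | h
  · exact key a b hne h
  · rw [csymm c]; exact key b a hne.symm h
lemma clique_star {t : ℕ} (ht : 15 ≤ t) (c : Sym2 V → Fin 2) (col : Fin 2)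
    (K : Finset V) (hK7 : 7 ≤ K.card)
    (hcl : ∀ a ∈ K, ∀ b ∈ K, a ≠ b → c s(a, b) = col)
    (u : V) (hu : u ∈ K) (hdeg : t - 1 ≤ (nbr c col u).card) :
    HasMonoCopy (SGraph t 3) c := by
  obtain ⟨k0, k1, k2, k3, k4, k5, hnd, h0, h1, h2, h3, h4, h5⟩ :=
    six_of (K.erase u) (by rw [Finset.card_erase_of_mem hu]; omega)
  have hmem : ∀ y ∈ K.erase u, y ∈ nbr c col u := by
    intro y hy
    rw [Finset.mem_erase] at hy
    rw [mem_nbr]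
    exact ⟨fun h => hy.1 h.symm, hcl u hu y hy.2 (fun h => hy.1 h.symm)⟩
  have hsub : ({k0, k1, k2, k3, k4, k5} : Finset V) ⊆ nbr c col u := by
    intro y hy
    simp only [Finset.mem_insert, Finset.mem_singleton] at hy
    rcases hy with rfl | rfl | rfl | rfl | rfl | rfl <;> exact hmem _ (by assumption)
  have hcard6 : ({k0, k1, k2, k3, k4, k5} : Finset V).card ≤ 6 := by
    have he : ({k0, k1, k2, k3, k4, k5} : Finset V) = ([k0,k1,k2,k3,k4,k5] : List V).toFinset := by
      simp
    rw [he]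
    exact le_trans (List.toFinset_card_le _) (by simp)
  obtain ⟨S, hTS, hSsub, hScard⟩ :=
    Finset.exists_subsuperset_card_eq hsub (le_trans hcard6 (by omega)) hdeg
  have hK : ∀ y ∈ K.erase u, y ∈ K := fun y hy => (Finset.mem_erase.mp hy).2
  have hgs : ∀ y, y ∈ ({k0, k1, k2, k3, k4, k5} : Finset V) → y ∈ S := fun y hy => hTS hy
  have huS : u ∉ S := by
    intro h
    have := hSsub h
    rw [mem_nbr] at this
    exact this.1 rfl
  have hnd' := hnd
  simp only [List.nodup_cons, List.mem_cons, List.mem_singleton, List.not_mem_nil, or_false,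
    not_or, List.nodup_nil, and_true] at hnd'
  apply embed ht c col u S hScard huS
    (fun y hy => (mem_nbr.mp (hSsub hy)).2) k0 k1 k2 k3 k4 k5
    (hgs _ (by simp)) (hgs _ (by simp)) (hgs _ (by simp)) (hgs _ (by simp)) (hgs _ (by simp))
    (hgs _ (by simp)) hnd
  · exact hcl _ (hK _ h0) _ (hK _ h1) hnd'.1.1
  · exact hcl _ (hK _ h2) _ (hK _ h3) hnd'.2.2.1.1
  · exact hcl _ (hK _ h4) _ (hK _ h5) hnd'.2.2.2.2.1

lemma clique_small {t : ℕ} (ht : 15 ≤ t) (c : Sym2 V → Fin 2)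
    (hno : ¬ HasMonoCopy (SGraph t 3) c) (col : Fin 2) (K : Finset V)
    (hcl : ∀ a ∈ K, ∀ b ∈ K, a ≠ b → c s(a, b) = col) : K.card ≤ t - 1 := by
  by_contra h
  push_neg at h
  obtain ⟨u, hu⟩ := Finset.card_pos.mp (show 0 < K.card by omega)
  have hmem : K.erase u ⊆ nbr c col u := by
    intro y hy
    rw [Finset.mem_erase] at hy
    rw [mem_nbr]
    exact ⟨fun hh => hy.1 hh.symm, hcl u hu y hy.2 (fun hh => hy.1 hh.symm)⟩
  have hdeg : t - 1 ≤ (nbr c col u).card := by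
    have := Finset.card_le_card hmem
    rw [Finset.card_erase_of_mem hu] at this
    omega
  exact hno (clique_star ht c col K (by omega) hcl u hu hdeg)

lemma nbhd_struct {t : ℕ} (ht : 15 ≤ t) (c : Sym2 V → Fin 2)
    (hno : ¬ HasMonoCopy (SGraph t 3) c) (col oth : Fin 2) (hne : col ≠ oth) (x : V)
    (hdeg : t - 1 ≤ (nbr c col x).card) :
    ∃ K : Finset V, K ⊆ nbr c col x ∧ (nbr c col x).card - 4 ≤ K.card ∧
      ∀ a ∈ K, ∀ b ∈ K, a ≠ b → c s(a, b) = oth := by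
  set N := nbr c col x with hN
  have hcov : ∃ C : Finset V, C.card ≤ 4 ∧
      ∀ a ∈ N, ∀ b ∈ N, a ≠ b → c s(a, b) = col → a ∈ C ∨ b ∈ C := by
    by_cases h1 : ∃ a ∈ N, ∃ b ∈ N, a ≠ b ∧ c s(a, b) = col
    · obtain ⟨p1, hp1, q1, hq1, hpq1, he1⟩ := h1
      by_cases h2 : ∃ a ∈ N, ∃ b ∈ N, a ≠ b ∧ c s(a, b) = col ∧
          a ∉ ({p1, q1} : Finset V) ∧ b ∉ ({p1, q1} : Finset V)
      · obtain ⟨p2, hp2, q2, hq2, hpq2, he2, hap2, haq2⟩ := h2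
        by_cases h3 : ∃ a ∈ N, ∃ b ∈ N, a ≠ b ∧ c s(a, b) = col ∧
            a ∉ ({p1, q1, p2, q2} : Finset V) ∧ b ∉ ({p1, q1, p2, q2} : Finset V)
        · exfalso
          apply hno
          obtain ⟨p3, hp3, q3, hq3, hpq3, he3, hap3, haq3⟩ := h3
          simp only [Finset.mem_insert, Finset.mem_singleton, not_or] at hap2 haq2 hap3 haq3
          have n13 : p1 ≠ p2 := fun h => hap2.1 h.symm
          have n14 : p1 ≠ q2 := fun h => haq2.1 h.symm
          have n15 : p1 ≠ p3 := fun h => hap3.1 h.symm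
          have n16 : p1 ≠ q3 := fun h => haq3.1 h.symm
          have n23 : q1 ≠ p2 := fun h => hap2.2 h.symm
          have n24 : q1 ≠ q2 := fun h => haq2.2 h.symm
          have n25 : q1 ≠ p3 := fun h => hap3.2.1 h.symm
          have n26 : q1 ≠ q3 := fun h => haq3.2.1 h.symm
          have n35 : p2 ≠ p3 := fun h => hap3.2.2.1 h.symm
          have n36 : p2 ≠ q3 := fun h => haq3.2.2.1 h.symm
          have n45 : q2 ≠ p3 := fun h => hap3.2.2.2 h.symm
          have n46 : q2 ≠ q3 := fun h => haq3.2.2.2 h.symm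
          have hnd : ([p1, q1, p2, q2, p3, q3] : List V).Nodup := by
            simp [List.nodup_cons, hpq1, hpq2, hpq3, n13, n14, n15, n16, n23, n24, n25, n26,
              n35, n36, n45, n46]
          have hsub : ({p1, q1, p2, q2, p3, q3} : Finset V) ⊆ N := by
            intro y hy
            simp only [Finset.mem_insert, Finset.mem_singleton] at hy
            rcases hy with rfl | rfl | rfl | rfl | rfl | rfl <;> assumption
          have hcard6 : ({p1, q1, p2, q2, p3, q3} : Finset V).card ≤ 6 := by
            have he : ({p1, q1, p2, q2, p3, q3} : Finset V)
                = ([p1, q1, p2, q2, p3, q3] : List V).toFinset := by simp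
            rw [he]
            exact le_trans (List.toFinset_card_le _) (by simp)
          obtain ⟨S, hTS, hSsub, hScard⟩ :=
            Finset.exists_subsuperset_card_eq hsub (le_trans hcard6 (by omega)) hdeg
          have hxSnot : x ∉ S := by
            intro h
            have := hSsub h
            rw [hN, mem_nbr] at this
            exact this.1 rfl
          have hgs : ∀ y, y ∈ ({p1, q1, p2, q2, p3, q3} : Finset V) → y ∈ S :=
            fun y hy => hTS hy
          exact embed ht c col x S hScard hxSnot
            (fun y hy => (mem_nbr.mp (hSsub hy)).2) p1 q1 p2 q2 p3 q3
            (hgs _ (by simp)) (hgs _ (by simp)) (hgs _ (by simp)) (hgs _ (by simp))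
            (hgs _ (by simp)) (hgs _ (by simp)) hnd he1 he2 he3
        · refine ⟨{p1, q1, p2, q2}, ?_, ?_⟩
          · have he : ({p1, q1, p2, q2} : Finset V) = ([p1, q1, p2, q2] : List V).toFinset := by
              simp
            rw [he]
            exact le_trans (List.toFinset_card_le _) (by simp)
          · intro a ha b hb hab hcc
            by_contra hc
            push_neg at hc
            exact h3 ⟨a, ha, b, hb, hab, hcc, hc.1, hc.2⟩
      · refine ⟨{p1, q1}, ?_, ?_⟩
        · have he : ({p1, q1} : Finset V) = ([p1, q1] : List V).toFinset := by simp
          rw [he]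
          exact le_trans (List.toFinset_card_le _) (by simp)
        · intro a ha b hb hab hcc
          by_contra hc
          push_neg at hc
          exact h2 ⟨a, ha, b, hb, hab, hcc, hc.1, hc.2⟩
    · exact ⟨∅, by simp, fun a ha b hb hab hcc => absurd ⟨a, ha, b, hb, hab, hcc⟩ h1⟩
  obtain ⟨C, hC4, hCcov⟩ := hcov
  refine ⟨N \ C, Finset.sdiff_subset, ?_, ?_⟩
  · calc N.card - 4 ≤ N.card - C.card := by omega
    _ ≤ (N \ C).card := Finset.le_card_sdiff C N
  · intro a ha b hb hab
    have ha' := Finset.mem_sdiff.mp ha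
    have hb' := Finset.mem_sdiff.mp hb
    refine two_other col oth _ hne ?_
    intro hcc
    rcases hCcov a ha'.1 b hb'.1 hab hcc with h | h
    · exact ha'.2 h
    · exact hb'.2 h


lemma nbr_comm {c : Sym2 V → Fin 2} {γ : Fin 2} {z y : V} :
    y ∈ nbr c γ z ↔ z ∈ nbr c γ y := by
  rw [mem_nbr, mem_nbr, csymm c z y]
  exact and_congr ne_comm Iff.rfl

lemma greedy {t : ℕ} (ht : 15 ≤ t) (c : Sym2 V → Fin 2)
    (hno : ¬ HasMonoCopy (SGraph t 3) c) (col oth : Fin 2) (hne : col ≠ oth)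
    (S S1 : Finset V) (hdisj : Disjoint S S1)
    (hm1 : ∀ y ∈ S1, ((nbr c oth y) \ S1).card ≤ 3)
    (z : V) (hzS : z ∉ S) (hzS1 : z ∉ S1) (hdegz : t - 1 ≤ (nbr c col z).card)
    (hA : 6 ≤ (S ∩ nbr c col z).card) (hA1 : 3 ≤ (S1 ∩ nbr c col z).card) : False := by
  obtain ⟨y0, y1, y2, hy01, hy02, hy12, hy0, hy1, hy2⟩ := three_of _ hA1
  have hB : ∀ y ∈ S1 ∩ nbr c col z, 3 ≤ ((S ∩ nbr c col z) ∩ nbr c col y).card := by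
    intro y hy
    obtain ⟨hyS1, _⟩ := Finset.mem_inter.mp hy
    have hsub : (S ∩ nbr c col z) \ nbr c col y ⊆ (nbr c oth y) \ S1 := by
      intro w hw
      obtain ⟨hw1, hw2⟩ := Finset.mem_sdiff.mp hw
      obtain ⟨hwS, _⟩ := Finset.mem_inter.mp hw1
      have hwne : y ≠ w := fun h => (Finset.disjoint_left.mp hdisj) (h ▸ hwS) hyS1
      have hcolw : c s(y, w) ≠ col := fun hcc => hw2 (mem_nbr.mpr ⟨hwne, hcc⟩)
      refine Finset.mem_sdiff.mpr ⟨mem_nbr.mpr ⟨hwne, two_other col oth _ hne hcolw⟩, ?_⟩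
      exact fun hwS1 => (Finset.disjoint_left.mp hdisj) hwS hwS1
    have h1 := Finset.card_le_card hsub
    have h2 := hm1 y hyS1
    have h3 := Finset.card_inter_add_card_sdiff (S ∩ nbr c col z) (nbr c col y)
    omega
  obtain ⟨x0, hx0⟩ := Finset.card_pos.mp (show 0 < ((S ∩ nbr c col z) ∩ nbr c col y0).card by
    have := hB y0 hy0; omega)
  obtain ⟨x1, hx1⟩ := Finset.card_pos.mp
    (show 0 < (((S ∩ nbr c col z) ∩ nbr c col y1) \ {x0}).card by
      have h1 := hB y1 hy1
      have h2 := Finset.le_card_sdiff ({x0} : Finset V) ((S ∩ nbr c col z) ∩ nbr c col y1)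
      rw [Finset.card_singleton] at h2
      omega)
  obtain ⟨x2, hx2⟩ := Finset.card_pos.mp
    (show 0 < (((S ∩ nbr c col z) ∩ nbr c col y2) \ ({x0, x1} : Finset V)).card by
      have h1 := hB y2 hy2
      have h2 := Finset.le_card_sdiff ({x0, x1} : Finset V) ((S ∩ nbr c col z) ∩ nbr c col y2)
      have h3 : ({x0, x1} : Finset V).card ≤ 2 := Finset.card_insert_le _ _
      omega)
  obtain ⟨hx1', hx1x0⟩ := Finset.mem_sdiff.mp hx1
  obtain ⟨hx2', hx2x01⟩ := Finset.mem_sdiff.mp hx2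
  simp only [Finset.mem_singleton] at hx1x0
  simp only [Finset.mem_insert, Finset.mem_singleton, not_or] at hx2x01
  -- basic memberships
  have hx0S : x0 ∈ S := (Finset.mem_inter.mp (Finset.mem_inter.mp hx0).1).1
  have hx0z : x0 ∈ nbr c col z := (Finset.mem_inter.mp (Finset.mem_inter.mp hx0).1).2
  have hx0y : x0 ∈ nbr c col y0 := (Finset.mem_inter.mp hx0).2
  have hx1S : x1 ∈ S := (Finset.mem_inter.mp (Finset.mem_inter.mp hx1').1).1
  have hx1z : x1 ∈ nbr c col z := (Finset.mem_inter.mp (Finset.mem_inter.mp hx1').1).2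
  have hx1y : x1 ∈ nbr c col y1 := (Finset.mem_inter.mp hx1').2
  have hx2S : x2 ∈ S := (Finset.mem_inter.mp (Finset.mem_inter.mp hx2').1).1
  have hx2z : x2 ∈ nbr c col z := (Finset.mem_inter.mp (Finset.mem_inter.mp hx2').1).2
  have hx2y : x2 ∈ nbr c col y2 := (Finset.mem_inter.mp hx2').2
  have hy0S1 : y0 ∈ S1 := (Finset.mem_inter.mp hy0).1
  have hy1S1 : y1 ∈ S1 := (Finset.mem_inter.mp hy1).1
  have hy2S1 : y2 ∈ S1 := (Finset.mem_inter.mp hy2).1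
  have hy0z : y0 ∈ nbr c col z := (Finset.mem_inter.mp hy0).2
  have hy1z : y1 ∈ nbr c col z := (Finset.mem_inter.mp hy1).2
  have hy2z : y2 ∈ nbr c col z := (Finset.mem_inter.mp hy2).2
  have hxy : ∀ x' : V, x' ∈ S → ∀ y' : V, y' ∈ S1 → x' ≠ y' :=
    fun x' hx' y' hy' h => (Finset.disjoint_left.mp hdisj) (h ▸ hx') hy'
  -- the six are distinct
  have n01 : x0 ≠ x1 := fun h => hx1x0 h.symm
  have n02 : x0 ≠ x2 := fun h => hx2x01.1 h.symm
  have n12 : x1 ≠ x2 := fun h => hx2x01.2 h.symm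
  have hnd : ([x0, y0, x1, y1, x2, y2] : List V).Nodup := by
    simp [List.nodup_cons, n01, n02, n12, hxy x0 hx0S y0 hy0S1, hxy x0 hx0S y1 hy1S1, hxy x0 hx0S y2 hy2S1,
      hxy x1 hx1S y0 hy0S1, hxy x1 hx1S y1 hy1S1, hxy x1 hx1S y2 hy2S1,
      hxy x2 hx2S y0 hy0S1, hxy x2 hx2S y1 hy1S1, hxy x2 hx2S y2 hy2S1,
      (hxy x0 hx0S y0 hy0S1).symm, (hxy x1 hx1S y0 hy0S1).symm, (hxy x2 hx2S y0 hy0S1).symm,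
      (hxy x1 hx1S y1 hy1S1).symm, (hxy x2 hx2S y1 hy1S1).symm, (hxy x2 hx2S y2 hy2S1).symm,
      hx2x01.1, hx2x01.2, hx1x0, hy01, hy02, hy12]
  -- col edges of the matching
  have e0 : c s(x0, y0) = col := by rw [csymm c]; exact (mem_nbr.mp hx0y).2
  have e1 : c s(x1, y1) = col := by rw [csymm c]; exact (mem_nbr.mp hx1y).2
  have e2 : c s(x2, y2) = col := by rw [csymm c]; exact (mem_nbr.mp hx2y).2
  -- extend to a (t-1)-set inside nbr c col z
  have hsub6 : ({x0, y0, x1, y1, x2, y2} : Finset V) ⊆ nbr c col z := by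
    intro w hw
    simp only [Finset.mem_insert, Finset.mem_singleton] at hw
    rcases hw with rfl | rfl | rfl | rfl | rfl | rfl <;> assumption
  have hcard6 : ({x0, y0, x1, y1, x2, y2} : Finset V).card ≤ 6 := by
    have he : ({x0, y0, x1, y1, x2, y2} : Finset V)
        = ([x0, y0, x1, y1, x2, y2] : List V).toFinset := by simp
    rw [he]
    exact le_trans (List.toFinset_card_le _) (by simp)
  obtain ⟨W, hTW, hWsub, hWcard⟩ :=
    Finset.exists_subsuperset_card_eq hsub6 (le_trans hcard6 (by omega)) hdegz
  have hzW : z ∉ W := fun h => (mem_nbr.mp (hWsub h)).1 rfl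
  have hgs : ∀ w, w ∈ ({x0, y0, x1, y1, x2, y2} : Finset V) → w ∈ W := fun w hw => hTW hw
  exact hno (embed ht c col z W hWcard hzW (fun y hy => (mem_nbr.mp (hWsub hy)).2)
    x0 y0 x1 y1 x2 y2 (hgs _ (by simp)) (hgs _ (by simp)) (hgs _ (by simp)) (hgs _ (by simp))
    (hgs _ (by simp)) (hgs _ (by simp)) hnd e0 e1 e2)


lemma double_count {c : Sym2 V → Fin 2} (oth : Fin 2) (A B : Finset V) :
    (∑ z ∈ A, (B ∩ nbr c oth z).card) = ∑ y ∈ B, (A ∩ nbr c oth y).card := by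
  have hfil : ∀ (D : Finset V) (w : V), D ∩ nbr c oth w = D.filter (fun u => u ∈ nbr c oth w) := by
    intro D w
    ext u
    simp [Finset.mem_inter, Finset.mem_filter]
  calc (∑ z ∈ A, (B ∩ nbr c oth z).card)
      = ∑ z ∈ A, ∑ y ∈ B, (if y ∈ nbr c oth z then 1 else 0) := by
        refine Finset.sum_congr rfl fun z _ => ?_
        rw [hfil, Finset.card_filter]
    _ = ∑ y ∈ B, ∑ z ∈ A, (if y ∈ nbr c oth z then 1 else 0) := Finset.sum_comm
    _ = ∑ y ∈ B, (A ∩ nbr c oth y).card := by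
        refine Finset.sum_congr rfl fun y _ => ?_
        rw [hfil, Finset.card_filter]
        refine Finset.sum_congr rfl fun z _ => ?_
        congr 1
        simp only [eq_iff_iff]
        exact nbr_comm

set_option maxHeartbeats 1000000 in
lemma upper {t : ℕ} (ht : 15 ≤ t) (c : Sym2 (Fin (2 * t - 1)) → Fin 2) :
    HasMonoCopy (SGraph t 3) c := by
  by_contra hno
  have hcardV : Fintype.card (Fin (2 * t - 1)) = 2 * t - 1 := Fintype.card_fin _
  have hsum : ∀ (col oth : Fin 2), col ≠ oth → ∀ x : Fin (2 * t - 1),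
      (nbr c col x).card + (nbr c oth x).card = 2 * t - 2 := by
    intro col oth hne x
    rw [deg_sum c hne x, hcardV]
    omega
  set v : Fin (2 * t - 1) := ⟨0, by omega⟩ with hv'
  obtain ⟨col, oth, hne, hv⟩ : ∃ col oth : Fin 2, col ≠ oth ∧ t - 1 ≤ (nbr c col v).card := by
    rcases le_or_gt (t - 1) ((nbr c 0 v).card) with h | h
    · exact ⟨0, 1, by decide, h⟩
    · refine ⟨1, 0, by decide, ?_⟩
      have := hsum 0 1 (by decide) v
      omega
  have hcdeg : ∀ K : Finset (Fin (2 * t - 1)), 7 ≤ K.card →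
      (∀ a ∈ K, ∀ b ∈ K, a ≠ b → c s(a, b) = oth) → ∀ u ∈ K, t ≤ (nbr c col u).card := by
    intro K h7 hcl u hu
    have hoth : (nbr c oth u).card ≤ t - 2 := by
      by_contra h
      push_neg at h
      exact hno (clique_star ht c oth K h7 hcl u hu (by omega))
    have := hsum col oth hne u
    omega
  have hcdeg' : ∀ K : Finset (Fin (2 * t - 1)), 7 ≤ K.card →
      (∀ a ∈ K, ∀ b ∈ K, a ≠ b → c s(a, b) = col) → ∀ u ∈ K, t ≤ (nbr c oth u).card := by
    intro K h7 hcl u hu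
    have hcol2 : (nbr c col u).card ≤ t - 2 := by
      by_contra h
      push_neg at h
      exact hno (clique_star ht c col K h7 hcl u hu (by omega))
    have := hsum col oth hne u
    omega
  obtain ⟨S0, hS0sub, hS0card, hS0cl⟩ := nbhd_struct ht c hno col oth hne v hv
  have hS0card' : 7 ≤ S0.card := by omega
  obtain ⟨u0, hu0⟩ := Finset.card_pos.mp (show 0 < S0.card by omega)
  have hdu0 : t ≤ (nbr c col u0).card := hcdeg S0 hS0card' hS0cl u0 hu0
  obtain ⟨S, hSsub, hScard, hScl⟩ := nbhd_struct ht c hno col oth hne u0 (by omega)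
  have hSt4 : t - 4 ≤ S.card := by omega
  have hS7 : 7 ≤ S.card := by omega
  obtain ⟨u1, hu1⟩ := Finset.card_pos.mp (show 0 < S.card by omega)
  have hdu1 : t ≤ (nbr c col u1).card := hcdeg S hS7 hScl u1 hu1
  obtain ⟨S1, hS1sub, hS1card, hS1cl⟩ := nbhd_struct ht c hno col oth hne u1 (by omega)
  have hS1t4 : t - 4 ≤ S1.card := by omega
  have hS17 : 7 ≤ S1.card := by omega
  have hdisj : Disjoint S S1 := by
    rw [Finset.disjoint_left]
    intro y hyS hyS1
    have h1 := mem_nbr.mp (hS1sub hyS1)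
    by_cases hyu : y = u1
    · exact h1.1 hyu.symm
    · have h2 := hScl u1 hu1 y hyS (fun h => hyu h.symm)
      exact hne (by rw [← h1.2, h2])
  have hSle : S.card ≤ t - 1 := clique_small ht c hno oth S hScl
  have hS1le : S1.card ≤ t - 1 := clique_small ht c hno oth S1 hS1cl
  set out := (Finset.univ : Finset (Fin (2 * t - 1))) \ (S ∪ S1) with hout
  have houtcard : out.card = 2 * t - 1 - S.card - S1.card := by
    rw [hout, Finset.card_sdiff_of_subset (Finset.subset_univ _), Finset.card_union_of_disjoint hdisj,
      Finset.card_univ, hcardV]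
    omega
  have hmemout : ∀ z, z ∈ out ↔ z ∉ S ∧ z ∉ S1 := by
    intro z
    simp only [hout, Finset.mem_sdiff, Finset.mem_univ, true_and, Finset.mem_union, not_or]
  have hmiss : ∀ W : Finset (Fin (2 * t - 1)), 7 ≤ W.card →
      (∀ a ∈ W, ∀ b ∈ W, a ≠ b → c s(a, b) = oth) →
      ∀ y ∈ W, ((nbr c oth y) \ W).card ≤ t - 1 - W.card := by
    intro W h7 hcl y hy
    have hsubW : W.erase y ⊆ (nbr c oth y) ∩ W := by
      intro w hw
      rw [Finset.mem_erase] at hw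
      exact Finset.mem_inter.mpr
        ⟨mem_nbr.mpr ⟨fun h => hw.1 h.symm, hcl y hy w hw.2 (fun h => hw.1 h.symm)⟩, hw.2⟩
    have h1 : W.card - 1 ≤ ((nbr c oth y) ∩ W).card := by
      have := Finset.card_le_card hsubW
      rw [Finset.card_erase_of_mem hy] at this
      exact this
    have h2 : (nbr c oth y).card ≤ t - 2 := by
      by_contra hcon
      push_neg at hcon
      exact hno (clique_star ht c oth W h7 hcl y hy (by omega))
    have h3 := Finset.card_inter_add_card_sdiff (nbr c oth y) W
    omega
  have houtdeg : ∀ z ∈ out, t ≤ (nbr c col z).card := by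
    intro z hz
    by_contra hcon
    push_neg at hcon
    have hzoth : t - 1 ≤ (nbr c oth z).card := by
      have := hsum col oth hne z
      omega
    obtain ⟨K', hK'sub, hK'card, hK'cl⟩ := nbhd_struct ht c hno oth col (Ne.symm hne) z hzoth
    have hK'7 : 7 ≤ K'.card := by omega
    have hex : ∃ k ∈ K', k ∈ S ∪ S1 := by
      by_contra hcc
      push_neg at hcc
      have hsub : K' ⊆ out := by
        intro k hk
        rw [hmemout]
        have := hcc k hk
        rw [Finset.mem_union] at this
        push_neg at this
        exact this
      have := Finset.card_le_card hsub
      omega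
    obtain ⟨k, hkK', hkSS1⟩ := hex
    have hk1 : t ≤ (nbr c oth k).card := hcdeg' K' hK'7 hK'cl k hkK'
    have hk2 : t ≤ (nbr c col k).card := by
      rcases Finset.mem_union.mp hkSS1 with h | h
      · exact hcdeg S hS7 hScl k h
      · exact hcdeg S1 hS17 hS1cl k h
    have := hsum col oth hne k
    omega
  have htri : ∀ z ∈ out, (S1.card - 2 ≤ (S1 ∩ nbr c oth z).card) ∨
      (S.card - 2 ≤ (S ∩ nbr c oth z).card) := by
    intro z hz
    have hzdeg : t ≤ (nbr c col z).card := houtdeg z hz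
    obtain ⟨hzS, hzS1⟩ := (hmemout z).mp hz
    obtain ⟨K, hKsub, hKcard, hKcl⟩ := nbhd_struct ht c hno col oth hne z (by omega)
    have hzK : z ∉ K := fun h => (mem_nbr.mp (hKsub h)).1 rfl
    have hsplit : K.card ≤ (K ∩ S).card + (K ∩ S1).card + ((K \ S) \ S1).card := by
      have e1 := Finset.card_inter_add_card_sdiff K S
      have e2 := Finset.card_inter_add_card_sdiff (K \ S) S1
      have m1 : (K \ S) ∩ S1 ⊆ K ∩ S1 := by
        intro w hw
        obtain ⟨hw1, hw2⟩ := Finset.mem_inter.mp hw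
        exact Finset.mem_inter.mpr ⟨(Finset.mem_sdiff.mp hw1).1, hw2⟩
      have := Finset.card_le_card m1
      omega
    have hKo : ((K \ S) \ S1).card ≤ out.card - 1 := by
      have hsub2 : (K \ S) \ S1 ⊆ out.erase z := by
        intro w hw
        simp only [Finset.mem_sdiff] at hw
        refine Finset.mem_erase.mpr ⟨?_, (hmemout w).mpr ⟨hw.1.2, hw.2⟩⟩
        rintro rfl
        exact hzK hw.1.1
      have := Finset.card_le_card hsub2
      rw [Finset.card_erase_of_mem hz] at this
      exact this
    have hpartgen : ∀ D : Finset (Fin (2 * t - 1)), z ∉ D →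
        D.card ≤ (D ∩ nbr c col z).card + (D ∩ nbr c oth z).card := by
      intro D hzD
      have hsub5 : D ⊆ (D ∩ nbr c col z) ∪ (D ∩ nbr c oth z) := by
        intro y hy
        have hyz : z ≠ y := fun h => hzD (h ▸ hy)
        rcases two_total col oth (c s(z, y)) hne with h | h
        · exact Finset.mem_union_left _ (Finset.mem_inter.mpr ⟨hy, mem_nbr.mpr ⟨hyz, h⟩⟩)
        · exact Finset.mem_union_right _ (Finset.mem_inter.mpr ⟨hy, mem_nbr.mpr ⟨hyz, h⟩⟩)
      have h1 := Finset.card_le_card hsub5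
      have h2 := Finset.card_union_le (D ∩ nbr c col z) (D ∩ nbr c oth z)
      omega
    by_cases hAne : (K ∩ S).Nonempty
    · left
      obtain ⟨x, hx⟩ := hAne
      have hxK := (Finset.mem_inter.mp hx).1
      have hxS := (Finset.mem_inter.mp hx).2
      have hb : (K ∩ S1).card + ((K \ S) \ S1).card ≤ t - 1 - S.card := by
        have hsub3 : (K ∩ S1) ∪ ((K \ S) \ S1) ⊆ (nbr c oth x) \ S := by
          intro w hw
          have hwK : w ∈ K ∧ w ∉ S := by
            rcases Finset.mem_union.mp hw with h | h
            · exact ⟨(Finset.mem_inter.mp h).1,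
                fun hh => (Finset.disjoint_left.mp hdisj) hh (Finset.mem_inter.mp h).2⟩
            · simp only [Finset.mem_sdiff] at h
              exact ⟨h.1.1, h.1.2⟩
          have hwx : x ≠ w := fun h => hwK.2 (h ▸ hxS)
          exact Finset.mem_sdiff.mpr ⟨mem_nbr.mpr ⟨hwx, hKcl x hxK w hwK.1 hwx⟩, hwK.2⟩
        have hdisj2 : Disjoint (K ∩ S1) ((K \ S) \ S1) := by
          rw [Finset.disjoint_left]
          intro w h1 h2
          simp only [Finset.mem_sdiff] at h2
          exact h2.2 (Finset.mem_inter.mp h1).2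
        have hc1 := Finset.card_le_card hsub3
        rw [Finset.card_union_of_disjoint hdisj2] at hc1
        have hc2 := hmiss S hS7 hScl x hxS
        omega
      have hAcard : 6 ≤ (K ∩ S).card := by omega
      have hcolzS1 : (S1 ∩ nbr c col z).card ≤ 2 := by
        by_contra hcc
        push_neg at hcc
        refine greedy ht c hno col oth hne S S1 hdisj ?_ z hzS hzS1 (by omega) ?_ (by omega)
        · intro y hy
          have := hmiss S1 hS17 hS1cl y hy
          omega
        · have hsub4 : K ∩ S ⊆ S ∩ nbr c col z := by
            intro w hw
            exact Finset.mem_inter.mpr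
              ⟨(Finset.mem_inter.mp hw).2, hKsub (Finset.mem_inter.mp hw).1⟩
          have := Finset.card_le_card hsub4
          omega
      have := hpartgen S1 hzS1
      omega
    · right
      have hA0 : (K ∩ S).card = 0 := by
        rw [Finset.not_nonempty_iff_eq_empty] at hAne
        rw [Finset.card_eq_zero]
        exact hAne
      have hA1ne : (K ∩ S1).Nonempty := by
        rw [← Finset.card_pos]
        omega
      obtain ⟨y, hy⟩ := hA1ne
      have hyK := (Finset.mem_inter.mp hy).1
      have hyS1 := (Finset.mem_inter.mp hy).2
      have hb : ((K \ S) \ S1).card ≤ t - 1 - S1.card := by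
        have hsub3 : ((K \ S) \ S1) ⊆ (nbr c oth y) \ S1 := by
          intro w hw
          simp only [Finset.mem_sdiff] at hw
          have hwy : y ≠ w := fun h => hw.2 (h ▸ hyS1)
          exact Finset.mem_sdiff.mpr ⟨mem_nbr.mpr ⟨hwy, hKcl y hyK w hw.1.1 hwy⟩, hw.2⟩
        have hc1 := Finset.card_le_card hsub3
        have hc2 := hmiss S1 hS17 hS1cl y hyS1
        omega
      have hA1card : 6 ≤ (K ∩ S1).card := by omega
      have hcolzS : (S ∩ nbr c col z).card ≤ 2 := by
        by_contra hcc
        push_neg at hcc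
        refine greedy ht c hno col oth hne S1 S hdisj.symm ?_ z hzS1 hzS (by omega) ?_ (by omega)
        · intro y' hy'
          have := hmiss S hS7 hScl y' hy'
          omega
        · have hsub4 : K ∩ S1 ⊆ S1 ∩ nbr c col z := by
            intro w hw
            exact Finset.mem_inter.mpr
              ⟨(Finset.mem_inter.mp hw).2, hKsub (Finset.mem_inter.mp hw).1⟩
          have := Finset.card_le_card hsub4
          omega
      have := hpartgen S hzS
      omega
  -- final counting
  set T1 := out.filter (fun z => S.card - 2 ≤ (S ∩ nbr c oth z).card) with hT1
  set T0 := out \ T1 with hT0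
  have hT0mem : ∀ z ∈ T0, S1.card - 2 ≤ (S1 ∩ nbr c oth z).card := by
    intro z hz
    rw [hT0, Finset.mem_sdiff] at hz
    rcases htri z hz.1 with h | h
    · exact h
    · exact absurd (Finset.mem_filter.mpr ⟨hz.1, h⟩) hz.2
  have hcount : ∀ (A B : Finset (Fin (2 * t - 1))) (m k : ℕ),
      (∀ z ∈ A, m ≤ (B ∩ nbr c oth z).card) → (∀ y ∈ B, (A ∩ nbr c oth y).card ≤ k) →
      A.card * m ≤ B.card * k := by
    intro A B m k h1 h2
    calc A.card * m = A.card • m := by rw [smul_eq_mul]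
      _ ≤ ∑ z ∈ A, (B ∩ nbr c oth z).card := Finset.card_nsmul_le_sum A (fun z => (B ∩ nbr c oth z).card) m h1
      _ = ∑ y ∈ B, (A ∩ nbr c oth y).card := double_count oth A B
      _ ≤ B.card • k := Finset.sum_le_card_nsmul B (fun y => (A ∩ nbr c oth y).card) k h2
      _ = B.card * k := by rw [smul_eq_mul]
  have hb1 : T1.card * (S.card - 2) ≤ S.card * (t - 1 - S.card) := by
    apply hcount
    · intro z hz
      rw [hT1, Finset.mem_filter] at hz
      exact hz.2
    · intro y hy
      have hsub : T1 ∩ nbr c oth y ⊆ (nbr c oth y) \ S := by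
        intro w hw
        obtain ⟨hw1, hw2⟩ := Finset.mem_inter.mp hw
        rw [hT1, Finset.mem_filter] at hw1
        exact Finset.mem_sdiff.mpr ⟨hw2, ((hmemout w).mp hw1.1).1⟩
      have := Finset.card_le_card hsub
      have := hmiss S hS7 hScl y hy
      omega
  have hb0 : T0.card * (S1.card - 2) ≤ S1.card * (t - 1 - S1.card) := by
    apply hcount
    · exact hT0mem
    · intro y hy
      have hsub : T0 ∩ nbr c oth y ⊆ (nbr c oth y) \ S1 := by
        intro w hw
        obtain ⟨hw1, hw2⟩ := Finset.mem_inter.mp hw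
        rw [hT0, Finset.mem_sdiff] at hw1
        exact Finset.mem_sdiff.mpr ⟨hw2, ((hmemout w).mp hw1.1).2⟩
      have := Finset.card_le_card hsub
      have := hmiss S1 hS17 hS1cl y hy
      omega
  have hf : ∀ (D : Finset (Fin (2 * t - 1))) (W : Finset (Fin (2 * t - 1))),
      t - 4 ≤ W.card → W.card ≤ t - 1 → D.card * (W.card - 2) ≤ W.card * (t - 1 - W.card) →
      D.card ≤ t - W.card - 1 := by
    intro D W hW1 hW2 hb
    by_contra hcc
    push_neg at hcc
    have h1 : (t - W.card) * (W.card - 2) ≤ D.card * (W.card - 2) :=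
      Nat.mul_le_mul_right _ (by omega)
    have h2 := le_trans h1 hb
    have key : t - W.card = (t - 1 - W.card) + 1 := by omega
    have h3 : ((t - 1 - W.card) + 1) * (W.card - 2) ≤ W.card * (t - 1 - W.card) := by
      rw [← key]; exact h2
    have h4 : W.card * (t - 1 - W.card) ≤ ((W.card - 2) + 2) * (t - 1 - W.card) :=
      Nat.mul_le_mul_right _ (by omega)
    have h5 := le_trans h3 h4
    have ha : 9 ≤ W.card - 2 := by omega
    have hbb : t - 1 - W.card ≤ 3 := by omega
    nlinarith [h5, ha, hbb]
  have hf1 : T1.card ≤ t - S.card - 1 := hf T1 S hSt4 hSle hb1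
  have hf0 : T0.card ≤ t - S1.card - 1 := hf T0 S1 hS1t4 hS1le hb0
  have hTsplit : T0.card + T1.card = out.card := by
    rw [hT0]
    exact Finset.card_sdiff_add_card_eq_card (by rw [hT1]; exact Finset.filter_subset _ _)
  omega


lemma lower {t : ℕ} (ht : 15 ≤ t) :
    ∃ c : Sym2 (Fin (2 * t - 2)) → Fin 2, ¬ HasMonoCopy (SGraph t 3) c := by
  classical
  set P : Fin (2 * t - 2) → Bool := fun x => decide ((x : ℕ) < t - 1) with hP
  have hcomm : ∀ x y : Fin (2 * t - 2),
      (if P x = P y then (0 : Fin 2) else 1) = (if P y = P x then 0 else 1) := by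
    intro x y
    by_cases h : P x = P y
    · rw [if_pos h, if_pos h.symm]
    · rw [if_neg h, if_neg (fun hh => h hh.symm)]
  set c : Sym2 (Fin (2 * t - 2)) → Fin 2 :=
    Sym2.lift ⟨fun x y => if P x = P y then 0 else 1, hcomm⟩ with hcdef
  have hc : ∀ x y, c s(x, y) = if P x = P y then 0 else 1 := by
    intro x y
    rw [hcdef]
    exact Sym2.lift_mk _ _ _
  refine ⟨c, ?_⟩
  rintro ⟨f, col, hf⟩
  set i0 : Fin t := ⟨0, by omega⟩ with hi0
  set i1 : Fin t := ⟨1, by omega⟩ with hi1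
  set i2 : Fin t := ⟨2, by omega⟩ with hi2
  have hadj : ∀ j : Fin t, (j : ℕ) ≠ 0 → (SGraph t 3).Adj i0 j := by
    intro j hj
    refine (SimpleGraph.fromRel_adj _ i0 j).mpr ⟨?_, Or.inl (Or.inl ?_)⟩
    · intro h
      apply hj
      rw [← h, hi0]
    · rw [hi0]
  have hadj12 : (SGraph t 3).Adj i1 i2 := by
    refine (SimpleGraph.fromRel_adj _ i1 i2).mpr ⟨?_, Or.inl (Or.inr ⟨?_, ?_, ?_⟩)⟩
    · intro h
      rw [hi1, hi2, Fin.mk.injEq] at h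
      omega
    · rw [hi1, hi2]
    · rw [hi1]
      rfl
    · rw [hi2]
      norm_num
  have hcol2 : col = 0 ∨ col = 1 := (by decide : ∀ z : Fin 2, z = 0 ∨ z = 1) col
  rcases hcol2 with rfl | rfl
  · have hsame : ∀ j : Fin t, P (f j) = P (f i0) := by
      intro j
      by_cases hj : (j : ℕ) = 0
      · have hji : j = i0 := Fin.ext (by rw [hj, hi0])
        rw [hji]
      · have h1 := hf i0 j (hadj j hj)
        rw [hc] at h1
        by_cases h : P (f i0) = P (f j)
        · exact h.symm
        · rw [if_neg h] at h1
          exact absurd h1 (by decide)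
    by_cases hside : P (f i0) = true
    · have hlt : ∀ j : Fin t, ((f j) : ℕ) < t - 1 := by
        intro j
        have h1 := hsame j
        rw [hside] at h1
        simpa [hP] using h1
      have hinj : Function.Injective (fun j : Fin t => (⟨(f j : ℕ), hlt j⟩ : Fin (t - 1))) := by
        intro a b hab
        have h1 : (f a : ℕ) = (f b : ℕ) := by simpa using congrArg Fin.val hab
        exact f.injective (Fin.ext h1)
      have hcard := Fintype.card_le_of_injective _ hinj
      simp only [Fintype.card_fin] at hcard
      omega
    · have hge : ∀ j : Fin t, t - 1 ≤ ((f j) : ℕ) := by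
        intro j
        have hj := hsame j
        have h2 : P (f j) = false := by
          rw [hj]
          exact Bool.not_eq_true _ |>.mp hside
        rw [hP] at h2
        simp only [decide_eq_false_iff_not, not_lt] at h2
        exact h2
      have hlt2 : ∀ j : Fin t, ((f j) : ℕ) - (t - 1) < t - 1 := by
        intro j
        have h1 := (f j).isLt
        have h2 := hge j
        omega
      have hinj : Function.Injective
          (fun j : Fin t => (⟨(f j : ℕ) - (t - 1), hlt2 j⟩ : Fin (t - 1))) := by
        intro a b hab
        have h1 : (f a : ℕ) - (t - 1) = (f b : ℕ) - (t - 1) := by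
          simpa using congrArg Fin.val hab
        have h2 := hge a
        have h3 := hge b
        exact f.injective (Fin.ext (by omega))
      have hcard := Fintype.card_le_of_injective _ hinj
      simp only [Fintype.card_fin] at hcard
      omega
  · have h01 := hf i0 i1 (hadj i1 (by rw [hi1]; exact Nat.one_ne_zero))
    have h02 := hf i0 i2 (hadj i2 (by rw [hi2]; exact (by omega : (2 : ℕ) ≠ 0)))
    have h12 := hf i1 i2 hadj12
    rw [hc] at h01 h02 h12
    have ne01 : P (f i0) ≠ P (f i1) := by
      intro h
      rw [if_pos h] at h01
      exact absurd h01 (by decide)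
    have ne02 : P (f i0) ≠ P (f i2) := by
      intro h
      rw [if_pos h] at h02
      exact absurd h02 (by decide)
    have ne12 : P (f i1) ≠ P (f i2) := by
      intro h
      rw [if_pos h] at h12
      exact absurd h12 (by decide)
    revert ne01 ne02 ne12
    cases P (f i0) <;> cases P (f i1) <;> cases P (f i2) <;> decide

end RamseyAux

theorem ramsey_St3 (t : ℕ) (ht : 15 ≤ t) :
    (∀ c : Sym2 (Fin (2 * t - 1)) → Fin 2, HasMonoCopy (SGraph t 3) c) ∧
    (∃ c : Sym2 (Fin (2 * t - 2)) → Fin 2, ¬ HasMonoCopy (SGraph t 3) c) := by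
  exact ⟨fun c => RamseyAux.upper ht c, RamseyAux.lower ht⟩
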